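/- Fix c₀ ≠ 0 and let 𝔥 ∈ C¹([−1, 1]) be positive, even (𝔥(−t) = 𝔥(t) for all t), and increasing on [0, 1]. Then the set Γ₁ := {(x, y) ∈ (0, ∞) × (−1, 1) : F₁(x, y) = 0} is connected; it is a regular curve with endpoints p₁ and −p₁, symmetric with respect to the axis y = 0, and it divides the phase space Θ₁ into exactly two regions, one bounded region Λ₀ adjacent to the axis x = 0 and one unbounded region Λ_∞. -/

import Mathlib

/-- The function `F₁` whose zero set in the phase space `Θ₁ = (0,∞) × (−1,1)`
is the nullcline `Γ₁`. -/
noncomputable def helicoidalF1 (c₀ : ℝ) (𝔥 : ℝ → ℝ) (p : ℝ × ℝ) : ℝ :=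
  2 * 𝔥 (p.1 * p.2 / Real.sqrt (c₀ ^ 2 * p.2 ^ 2 + p.1 ^ 2))
      * (p.1 ^ 2 + c₀ ^ 2 * p.2 ^ 2) ^ ((3 : ℝ) / 2)
    - (p.1 ^ 2 + 2 * c₀ ^ 2 * p.2 ^ 2) * Real.sqrt (1 - p.2 ^ 2)

namespace Helic

/-- radius -/
noncomputable def rr (c₀ : ℝ) (p : ℝ × ℝ) : ℝ := Real.sqrt (c₀ ^ 2 * p.2 ^ 2 + p.1 ^ 2)

/-- normalized nullcline function -/
noncomputable def GG (c₀ : ℝ) (𝔥 : ℝ → ℝ) (p : ℝ × ℝ) : ℝ :=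
  2 * 𝔥 (p.1 * p.2 / rr c₀ p)
    - Real.sqrt (1 - p.2 ^ 2) * ((c₀ ^ 2 * p.2 ^ 2 + p.1 ^ 2) + c₀ ^ 2 * p.2 ^ 2) / (rr c₀ p) ^ 3

lemma rr_pos {c₀ : ℝ} {p : ℝ × ℝ} (h : 0 < c₀ ^ 2 * p.2 ^ 2 + p.1 ^ 2) : 0 < rr c₀ p :=
  Real.sqrt_pos.2 h

lemma sq_rr {c₀ : ℝ} (p : ℝ × ℝ) :
    (rr c₀ p) ^ 2 = c₀ ^ 2 * p.2 ^ 2 + p.1 ^ 2 := Real.sq_sqrt (by positivity)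

lemma s_nonneg (c₀ : ℝ) (p : ℝ × ℝ) : 0 ≤ c₀ ^ 2 * p.2 ^ 2 + p.1 ^ 2 := by positivity

lemma abs_u_le {c₀ : ℝ} {p : ℝ × ℝ} (hx : 0 ≤ p.1) :
    |p.1 * p.2 / rr c₀ p| ≤ |p.2| := by
  rcases eq_or_lt_of_le (s_nonneg c₀ p) with h | h
  · have hx0 : p.1 = 0 := by nlinarith [sq_nonneg p.1, sq_nonneg (c₀*p.2)]
    simp [hx0, abs_nonneg]
  · have hr := rr_pos h
    have hxr : p.1 ≤ rr c₀ p := by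
      have : p.1 = Real.sqrt (p.1 ^ 2) := by rw [Real.sqrt_sq hx]
      rw [this]
      exact Real.sqrt_le_sqrt (by nlinarith [sq_nonneg (c₀ * p.2)])
    rw [abs_div, abs_of_pos hr, div_le_iff₀ hr, abs_mul, abs_of_nonneg hx]
    calc p.1 * |p.2| ≤ rr c₀ p * |p.2| := by
          exact mul_le_mul_of_nonneg_right hxr (abs_nonneg _)
      _ = |p.2| * rr c₀ p := mul_comm _ _

lemma F_eq_G_mul {c₀ : ℝ} (𝔥 : ℝ → ℝ) {p : ℝ × ℝ} (h : 0 < c₀ ^ 2 * p.2 ^ 2 + p.1 ^ 2) :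
    helicoidalF1 c₀ 𝔥 p = GG c₀ 𝔥 p * (rr c₀ p) ^ 3 := by
  have hr := rr_pos h
  have hrpow : (p.1 ^ 2 + c₀ ^ 2 * p.2 ^ 2) ^ ((3:ℝ)/2) = (rr c₀ p) ^ 3 := by
    have hs : p.1 ^ 2 + c₀ ^ 2 * p.2 ^ 2 = c₀ ^ 2 * p.2 ^ 2 + p.1 ^ 2 := by ring
    rw [hs]
    have h1 : rr c₀ p = (c₀ ^ 2 * p.2 ^ 2 + p.1 ^ 2) ^ ((1:ℝ)/2) := by
      rw [rr, Real.sqrt_eq_rpow]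
    rw [h1, ← Real.rpow_natCast _ 3, ← Real.rpow_mul h.le]
    norm_num
  have hs2 : p.1 ^ 2 + 2 * c₀ ^ 2 * p.2 ^ 2
      = (c₀ ^ 2 * p.2 ^ 2 + p.1 ^ 2) + c₀ ^ 2 * p.2 ^ 2 := by ring
  rw [helicoidalF1, GG, hrpow, hs2]
  have hrr : rr c₀ p = Real.sqrt (c₀ ^ 2 * p.2 ^ 2 + p.1 ^ 2) := rfl
  rw [← hrr, sub_mul, div_mul_cancel₀ _ (pow_ne_zero 3 hr.ne')]
  ring


lemma h_abs {𝔥 : ℝ → ℝ} (heven : ∀ t ∈ Set.Icc (-1 : ℝ) 1, 𝔥 (-t) = 𝔥 t)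
    {t : ℝ} (ht : |t| ≤ 1) : 𝔥 t = 𝔥 |t| := by
  rcases le_or_gt 0 t with h | h
  · rw [abs_of_nonneg h]
  · rw [abs_of_neg h, ← heven t ⟨by linarith [abs_of_neg h, (abs_le.1 ht).1], by linarith⟩]

lemma rr_mono {c₀ x₁ x₂ y : ℝ} (h0 : 0 ≤ x₁) (h12 : x₁ ≤ x₂) :
    rr c₀ (x₁, y) ≤ rr c₀ (x₂, y) := Real.sqrt_le_sqrt (by simp only; nlinarith)

lemma rr_strict {c₀ x₁ x₂ y : ℝ} (h0 : 0 ≤ x₁) (h12 : x₁ < x₂) :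
    rr c₀ (x₁, y) < rr c₀ (x₂, y) :=
  Real.sqrt_lt_sqrt (by positivity) (by simp only; nlinarith)

lemma G_mono {c₀ : ℝ} {𝔥 : ℝ → ℝ}
    (heven : ∀ t ∈ Set.Icc (-1 : ℝ) 1, 𝔥 (-t) = 𝔥 t)
    (hmono : MonotoneOn 𝔥 (Set.Icc 0 1))
    {x₁ x₂ y : ℝ} (hy : y ∈ Set.Ioo (-1 : ℝ) 1) (h0 : 0 ≤ x₁) (h12 : x₁ ≤ x₂)
    (hs : 0 < c₀ ^ 2 * y ^ 2 + x₁ ^ 2) :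
    Real.sqrt (1 - y ^ 2) * (1 / rr c₀ (x₁, y) - 1 / rr c₀ (x₂, y))
      ≤ GG c₀ 𝔥 (x₂, y) - GG c₀ 𝔥 (x₁, y) := by
  set r₁ := rr c₀ (x₁, y) with hr₁
  set r₂ := rr c₀ (x₂, y) with hr₂
  have hay : |y| < 1 := abs_lt.2 ⟨hy.1, hy.2⟩
  have hr1 : 0 < r₁ := rr_pos hs
  have hr12 : r₁ ≤ r₂ := rr_mono h0 h12
  have hr2 : 0 < r₂ := lt_of_lt_of_le hr1 hr12
  have hsq1 : r₁ ^ 2 = c₀ ^ 2 * y ^ 2 + x₁ ^ 2 := sq_rr _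
  have hsq2 : r₂ ^ 2 = c₀ ^ 2 * y ^ 2 + x₂ ^ 2 := sq_rr _
  set a := c₀ ^ 2 * y ^ 2 with ha
  have ha0 : 0 ≤ a := by positivity
  -- monotonicity of the 𝔥 term
  have hu1 : |x₁ * y / r₁| = x₁ * |y| / r₁ := by
    rw [abs_div, abs_mul, abs_of_nonneg h0, abs_of_pos hr1]
  have hu2 : |x₂ * y / r₂| = x₂ * |y| / r₂ := by
    rw [abs_div, abs_mul, abs_of_nonneg (h0.trans h12), abs_of_pos hr2]
  have hxr : x₁ * r₂ ≤ x₂ * r₁ := by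
    have e1 : x₁ * r₂ = Real.sqrt (x₁ ^ 2 * (a + x₂ ^ 2)) := by
      rw [Real.sqrt_mul (sq_nonneg x₁), Real.sqrt_sq h0, hr₂, rr]
    have e2 : x₂ * r₁ = Real.sqrt (x₂ ^ 2 * (a + x₁ ^ 2)) := by
      rw [Real.sqrt_mul (sq_nonneg x₂), Real.sqrt_sq (h0.trans h12), hr₁, rr]
    rw [e1, e2]
    have hx2 : x₁ ^ 2 ≤ x₂ ^ 2 := by nlinarith
    exact Real.sqrt_le_sqrt (by nlinarith [mul_le_mul_of_nonneg_left hx2 ha0])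
  have huu : |x₁ * y / r₁| ≤ |x₂ * y / r₂| := by
    rw [hu1, hu2, div_le_div_iff₀ hr1 hr2]
    calc x₁ * |y| * r₂ = (x₁ * r₂) * |y| := by ring
      _ ≤ (x₂ * r₁) * |y| := mul_le_mul_of_nonneg_right hxr (abs_nonneg y)
      _ = x₂ * |y| * r₁ := by ring
  have hub2 : |x₂ * y / r₂| ≤ |y| := by
    rw [hu2, div_le_iff₀ hr2]
    have : x₂ ≤ r₂ := by
      rw [hr₂, rr]; simp only
      calc x₂ = Real.sqrt (x₂ ^ 2) := (Real.sqrt_sq (h0.trans h12)).symm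
        _ ≤ _ := Real.sqrt_le_sqrt (by nlinarith)
    nlinarith [abs_nonneg y]
  have hmh : 𝔥 (x₁ * y / r₁) ≤ 𝔥 (x₂ * y / r₂) := by
    have e1 : 𝔥 (x₁ * y / r₁) = 𝔥 |x₁ * y / r₁| :=
      h_abs heven (le_trans (le_trans huu hub2) hay.le)
    have e2 : 𝔥 (x₂ * y / r₂) = 𝔥 |x₂ * y / r₂| :=
      h_abs heven (le_trans hub2 hay.le)
    rw [e1, e2]
    exact hmono ⟨abs_nonneg _, le_trans (le_trans huu hub2) hay.le⟩
      ⟨abs_nonneg _, le_trans hub2 hay.le⟩ huu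
  -- the algebraic part
  have key : 1 / r₁ - 1 / r₂ ≤ (r₁ ^ 2 + a) / r₁ ^ 3 - (r₂ ^ 2 + a) / r₂ ^ 3 := by
    have e1 : (r₁ ^ 2 + a) / r₁ ^ 3 = 1 / r₁ + a / r₁ ^ 3 := by field_simp
    have e2 : (r₂ ^ 2 + a) / r₂ ^ 3 = 1 / r₂ + a / r₂ ^ 3 := by field_simp
    have : a / r₂ ^ 3 ≤ a / r₁ ^ 3 := by gcongr
    linarith
  have hsq : 0 ≤ Real.sqrt (1 - y ^ 2) := Real.sqrt_nonneg _
  have hG1 : GG c₀ 𝔥 (x₁, y) = 2 * 𝔥 (x₁ * y / r₁)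
      - Real.sqrt (1 - y ^ 2) * (r₁ ^ 2 + a) / r₁ ^ 3 := by
    rw [GG]; simp only; rw [← hr₁, ← hsq1]
  have hG2 : GG c₀ 𝔥 (x₂, y) = 2 * 𝔥 (x₂ * y / r₂)
      - Real.sqrt (1 - y ^ 2) * (r₂ ^ 2 + a) / r₂ ^ 3 := by
    rw [GG]; simp only; rw [← hr₂, ← hsq2]
  rw [hG1, hG2]
  have := mul_le_mul_of_nonneg_left key hsq
  have h3 : Real.sqrt (1-y^2) * ((r₁^2+a)/r₁^3 - (r₂^2+a)/r₂^3)
      = Real.sqrt (1-y^2) * (r₁^2+a)/r₁^3 - Real.sqrt (1-y^2) * (r₂^2+a)/r₂^3 := by ring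
  nlinarith [this]

lemma x_le_rr {c₀ : ℝ} {p : ℝ × ℝ} (hx : 0 ≤ p.1) : p.1 ≤ rr c₀ p := by
  calc p.1 = Real.sqrt (p.1 ^ 2) := (Real.sqrt_sq hx).symm
    _ ≤ _ := Real.sqrt_le_sqrt (by nlinarith [sq_nonneg (c₀ * p.2)])

lemma G_at_zero {c₀ y : ℝ} (𝔥 : ℝ → ℝ) (h : c₀ * y ≠ 0) :
    GG c₀ 𝔥 (0, y) = 2 * 𝔥 0 - 2 * Real.sqrt (1 - y ^ 2) / |c₀ * y| := by
  have habs : 0 < |c₀ * y| := abs_pos.2 h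
  have hr : rr c₀ (0, y) = |c₀ * y| := by
    rw [rr]; simp only
    rw [show c₀ ^ 2 * y ^ 2 + 0 ^ 2 = (c₀ * y) ^ 2 by ring, Real.sqrt_sq_eq_abs]
  rw [GG]; simp only [hr]
  rw [zero_mul, zero_div]
  have : c₀ ^ 2 * y ^ 2 = |c₀ * y| ^ 2 := by rw [sq_abs]; ring
  rw [this]
  field_simp
  have hyc : |y * c₀| ≠ 0 := by rw [mul_comm]; exact habs.ne'
  field_simp
  ring

lemma G_x0 {c₀ x : ℝ} (𝔥 : ℝ → ℝ) (hx : 0 < x) :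
    GG c₀ 𝔥 (x, 0) = 2 * 𝔥 0 - 1 / x := by
  have hr : rr c₀ (x, 0) = x := by
    rw [rr]; simp only
    rw [show c₀ ^ 2 * 0 ^ 2 + x ^ 2 = x ^ 2 by ring, Real.sqrt_sq hx.le]
  rw [GG]; simp only [hr]
  norm_num
  rw [show x ^ 2 / x ^ 3 = x ^ 2 / x ^ 3 * (x / x) by rw [div_self hx.ne']; ring]
  field_simp

lemma y1_lt_iff {c₀ h₀ y : ℝ} (hc : c₀ ≠ 0) (hh : 0 < h₀) :
    |y| < 1 / Real.sqrt (1 + c₀ ^ 2 * h₀ ^ 2) ↔ h₀ * |c₀ * y| < Real.sqrt (1 - y ^ 2) := by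
  set k := 1 + c₀ ^ 2 * h₀ ^ 2 with hk
  have hk1 : 1 < k := by nlinarith [sq_nonneg c₀, sq_nonneg h₀, pow_pos hh 2,
    (by positivity : 0 < c₀ ^ 2)]
  have hk0 : 0 < k := by linarith
  have e1 : 1 / Real.sqrt k = Real.sqrt (1 / k) := by
    rw [one_div, one_div, Real.sqrt_inv]
  rw [e1, Real.lt_sqrt (abs_nonneg y), Real.lt_sqrt (by positivity), sq_abs,
    mul_pow, sq_abs, lt_div_iff₀ hk0]
  constructor <;> intro h <;> nlinarith

lemma y1_pos {c₀ h₀ : ℝ} (hh : 0 < h₀) : 0 < 1 / Real.sqrt (1 + c₀ ^ 2 * h₀ ^ 2) := by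
  positivity

lemma y1_lt_one {c₀ h₀ : ℝ} (hc : c₀ ≠ 0) (hh : 0 < h₀) :
    1 / Real.sqrt (1 + c₀ ^ 2 * h₀ ^ 2) < 1 := by
  rw [div_lt_one (by positivity)]
  have : (1:ℝ) ^ 2 < 1 + c₀ ^ 2 * h₀ ^ 2 := by
    nlinarith [pow_pos hh 2, (by positivity : 0 < c₀ ^ 2)]
  exact (Real.lt_sqrt (by norm_num)).2 (by nlinarith)

lemma G_far {c₀ m : ℝ} {𝔥 : ℝ → ℝ} (hm : ∀ t ∈ Set.Icc (-1 : ℝ) 1, m ≤ 𝔥 t) (hm0 : 0 < m)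
    {x y : ℝ} (hy : y ∈ Set.Ioo (-1 : ℝ) 1) (hx1 : 1 ≤ x) (hx2 : (1 + c₀ ^ 2) / m ≤ x) :
    0 < GG c₀ 𝔥 (x, y) := by
  have hx0 : 0 < x := lt_of_lt_of_le one_pos hx1
  have hay : |y| ≤ 1 := by rw [abs_le]; exact ⟨hy.1.le, hy.2.le⟩
  have hr : 0 < rr c₀ (x, y) := rr_pos (by simp only; positivity)
  have hxr : x ≤ rr c₀ (x, y) := x_le_rr (c₀ := c₀) (p := (x, y)) hx0.le
  have hu : |x * y / rr c₀ (x, y)| ≤ 1 := le_trans (abs_u_le (c₀ := c₀) (p := (x, y)) hx0.le) hay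
  have hhu : m ≤ 𝔥 (x * y / rr c₀ (x, y)) := hm _ (abs_le.1 hu)
  rw [GG]; simp only
  rw [← sq_rr (c₀ := c₀) (x, y)]
  set r := rr c₀ (x, y)
  have hy2 : y ^ 2 ≤ 1 := by nlinarith [hy.1, hy.2]
  have hsq1 : Real.sqrt (1 - y ^ 2) ≤ 1 := Real.sqrt_le_one.2 (by nlinarith)
  have ha : c₀ ^ 2 * y ^ 2 ≤ c₀ ^ 2 := by nlinarith [sq_nonneg c₀]
  have key : (r ^ 2 + c₀ ^ 2 * y ^ 2) / r ^ 3 ≤ (1 + c₀ ^ 2) / x := by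
    have e : (r ^ 2 + c₀ ^ 2 * y ^ 2) / r ^ 3 = 1 / r + (c₀ ^ 2 * y ^ 2) / r ^ 3 := by
      field_simp
    rw [e]
    have h1 : 1 / r ≤ 1 / x := by gcongr
    have hxx : x ≤ x ^ 3 := by
      nlinarith [mul_nonneg (mul_nonneg hx0.le (by linarith : (0:ℝ) ≤ x - 1))
        (by linarith : (0:ℝ) ≤ x + 1)]
    have h2 : (c₀ ^ 2 * y ^ 2) / r ^ 3 ≤ c₀ ^ 2 / x := by
      calc (c₀ ^ 2 * y ^ 2) / r ^ 3 ≤ c₀ ^ 2 / r ^ 3 := by gcongr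
        _ ≤ c₀ ^ 2 / x ^ 3 := by gcongr
        _ ≤ c₀ ^ 2 / x := by gcongr
    calc 1 / r + (c₀ ^ 2 * y ^ 2) / r ^ 3 ≤ 1 / x + c₀ ^ 2 / x := by linarith
      _ = (1 + c₀ ^ 2) / x := by field_simp
  have hfin : Real.sqrt (1 - y ^ 2) * (r ^ 2 + c₀ ^ 2 * y ^ 2) / r ^ 3 ≤ m := by
    calc Real.sqrt (1 - y ^ 2) * (r ^ 2 + c₀ ^ 2 * y ^ 2) / r ^ 3
        = Real.sqrt (1 - y ^ 2) * ((r ^ 2 + c₀ ^ 2 * y ^ 2) / r ^ 3) := by ring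
      _ ≤ 1 * ((1 + c₀ ^ 2) / x) := by
          apply mul_le_mul hsq1 key (by positivity) (by norm_num)
      _ = (1 + c₀ ^ 2) / x := by ring
      _ ≤ m := by rw [div_le_iff₀ hx0]; rw [div_le_iff₀ hm0] at hx2; linarith [mul_comm m x]
  linarith

lemma diffAt_F {c₀ : ℝ} {𝔥 : ℝ → ℝ} (hC1 : ContDiffOn ℝ 1 𝔥 (Set.Icc (-1) 1))
    {p : ℝ × ℝ} (hs : 0 < c₀ ^ 2 * p.2 ^ 2 + p.1 ^ 2)
    (hu : |p.1 * p.2 / rr c₀ p| < 1) (hy : |p.2| < 1) :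
    DifferentiableAt ℝ (helicoidalF1 c₀ 𝔥) p := by
  have hr := rr_pos hs
  have hsd : DifferentiableAt ℝ (fun q : ℝ × ℝ => c₀ ^ 2 * q.2 ^ 2 + q.1 ^ 2) p := by
    fun_prop
  have hrd : DifferentiableAt ℝ (rr c₀) p := hsd.sqrt hs.ne'
  have hud : DifferentiableAt ℝ (fun q : ℝ × ℝ => q.1 * q.2 / rr c₀ q) p := by
    simp only [div_eq_mul_inv]
    exact (by fun_prop : DifferentiableAt ℝ (fun q : ℝ × ℝ => q.1 * q.2) p).mul
      (hrd.inv hr.ne')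
  have hhd : DifferentiableAt ℝ 𝔥 (p.1 * p.2 / rr c₀ p) := by
    have hmem : Set.Icc (-1 : ℝ) 1 ∈ nhds (p.1 * p.2 / rr c₀ p) :=
      Icc_mem_nhds (by linarith [(abs_lt.1 hu).1]) (abs_lt.1 hu).2
    exact (hC1.contDiffAt hmem).differentiableAt one_ne_zero
  have h1 : DifferentiableAt ℝ (fun q : ℝ × ℝ => 𝔥 (q.1 * q.2 / rr c₀ q)) p :=
    hhd.comp p hud
  have h2 : DifferentiableAt ℝ (fun q : ℝ × ℝ => (q.1 ^ 2 + c₀ ^ 2 * q.2 ^ 2) ^ ((3:ℝ)/2)) p := by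
    apply DifferentiableAt.rpow_const (by fun_prop)
    left; nlinarith
  have h3 : DifferentiableAt ℝ (fun q : ℝ × ℝ => Real.sqrt (1 - q.2 ^ 2)) p :=
    (by fun_prop : DifferentiableAt ℝ (fun q : ℝ × ℝ => 1 - q.2 ^ 2) p).sqrt
      (by nlinarith [abs_nonneg p.2, sq_abs p.2])
  have : DifferentiableAt ℝ (fun q : ℝ × ℝ =>
      2 * 𝔥 (q.1 * q.2 / rr c₀ q) * (q.1 ^ 2 + c₀ ^ 2 * q.2 ^ 2) ^ ((3:ℝ)/2)
        - (q.1 ^ 2 + 2 * c₀ ^ 2 * q.2 ^ 2) * Real.sqrt (1 - q.2 ^ 2)) p :=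
    ((h1.const_mul 2).mul h2).sub ((by fun_prop : DifferentiableAt ℝ
      (fun q : ℝ × ℝ => q.1 ^ 2 + 2 * c₀ ^ 2 * q.2 ^ 2) p).mul h3)
  exact this


lemma F_zero_of_G {c₀ : ℝ} (𝔥 : ℝ → ℝ) {p : ℝ × ℝ} (h : 0 < c₀ ^ 2 * p.2 ^ 2 + p.1 ^ 2)
    (hG : GG c₀ 𝔥 p = 0) : helicoidalF1 c₀ 𝔥 p = 0 := by
  rw [F_eq_G_mul 𝔥 h, hG, zero_mul]

lemma fderiv_F_pos {c₀ : ℝ} {𝔥 : ℝ → ℝ} (hC1 : ContDiffOn ℝ 1 𝔥 (Set.Icc (-1) 1))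
    (heven : ∀ t ∈ Set.Icc (-1 : ℝ) 1, 𝔥 (-t) = 𝔥 t)
    (hmono : MonotoneOn 𝔥 (Set.Icc 0 1))
    {x y : ℝ} (hx : 0 < x) (hy : y ∈ Set.Ioo (-1 : ℝ) 1)
    (hG0 : GG c₀ 𝔥 (x, y) = 0) :
    0 < fderiv ℝ (helicoidalF1 c₀ 𝔥) (x, y) (1, 0) := by
  have hs : 0 < c₀ ^ 2 * y ^ 2 + x ^ 2 := by positivity
  have hay : |y| < 1 := abs_lt.2 ⟨hy.1, hy.2⟩
  have hr : 0 < rr c₀ (x, y) := rr_pos hs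
  have h1y : 0 < 1 - y ^ 2 := by nlinarith [hy.1, hy.2]
  have huabs : |x * y / rr c₀ (x, y)| < 1 :=
    lt_of_le_of_lt (abs_u_le (c₀ := c₀) (p := (x, y)) hx.le) hay
  have hdF : DifferentiableAt ℝ (helicoidalF1 c₀ 𝔥) (x, y) := diffAt_F hC1 hs huabs hay
  set r := rr c₀ (x, y) with hrdef
  -- derivative of φ t = F (x+t, y) at 0
  have h00 : ((x + (0:ℝ)), y) = (x, y) := by norm_num
  have hline : HasDerivAt (fun t : ℝ => ((x + t : ℝ), y)) ((1 : ℝ), (0 : ℝ)) 0 :=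
    HasDerivAt.prodMk (by simpa using (hasDerivAt_id (0:ℝ)).const_add x) (hasDerivAt_const 0 y)
  have hdF' : HasFDerivAt (helicoidalF1 c₀ 𝔥) (fderiv ℝ (helicoidalF1 c₀ 𝔥) (x, y))
      ((x + (0:ℝ)), y) := by rw [h00]; exact hdF.hasFDerivAt
  have hφ : HasDerivAt (fun t : ℝ => helicoidalF1 c₀ 𝔥 (x + t, y))
      (fderiv ℝ (helicoidalF1 c₀ 𝔥) (x, y) (1, 0)) 0 :=
    by have := hdF'.comp_hasDerivAt 0 hline; exact this
  -- derivative of ρ t = rr c₀ (x+t, y) at 0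
  have hρ0r : rr c₀ ((x + (0:ℝ)), y) = r := by rw [h00]
  have hsum : HasDerivAt (fun t : ℝ => c₀ ^ 2 * y ^ 2 + (x + t) ^ 2) (2 * x) 0 := by
    have h1 : HasDerivAt (fun t : ℝ => x + t) 1 0 := by
      simpa using (hasDerivAt_id (0:ℝ)).const_add x
    have h2 := (h1.pow 2).const_add (c₀ ^ 2 * y ^ 2)
    refine h2.congr_deriv ?_
    norm_num
  have hs0 : (0:ℝ) < c₀ ^ 2 * y ^ 2 + (x + 0) ^ 2 := by positivity
  have hρ : HasDerivAt (fun t : ℝ => rr c₀ (x + t, y)) (x / r) 0 := by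
    have h3 := hsum.sqrt hs0.ne'
    have e : Real.sqrt (c₀ ^ 2 * y ^ 2 + (x + 0) ^ 2) = r := hρ0r
    rw [e] at h3
    refine h3.congr_deriv ?_
    field_simp
  have hinv : HasDerivAt (fun t : ℝ => (rr c₀ (x + t, y))⁻¹) (-(x / r) / r ^ 2) 0 := by
    have := hρ.inv (by rw [hρ0r]; exact hr.ne')
    rwa [hρ0r] at this
  have hA : HasDerivAt (fun t : ℝ => Real.sqrt (1 - y ^ 2) * (1 / r - 1 / rr c₀ (x + t, y)))
      (Real.sqrt (1 - y ^ 2) * (x / r / r ^ 2)) 0 := by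
    simp only [one_div]
    have h2 : HasDerivAt (fun t : ℝ => r⁻¹ - (rr c₀ (x + t, y))⁻¹) (-(-(x / r) / r ^ 2)) 0 :=
      hinv.const_sub r⁻¹
    have h3 := h2.const_mul (Real.sqrt (1 - y ^ 2))
    refine h3.congr_deriv ?_
    field_simp
  have hB : HasDerivAt (fun t : ℝ => (rr c₀ (x + t, y)) ^ 3) (3 * r ^ 2 * (x / r)) 0 := by
    have := hρ.pow 3
    rw [hρ0r] at this
    refine this.congr_deriv ?_
    norm_num
  have hψ : HasDerivAt (fun t : ℝ =>
      Real.sqrt (1 - y ^ 2) * (1 / r - 1 / rr c₀ (x + t, y)) * (rr c₀ (x + t, y)) ^ 3)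
      (x * Real.sqrt (1 - y ^ 2)) 0 := by
    have h4 := hA.mul hB
    rw [hρ0r] at h4
    refine h4.congr_deriv ?_
    field_simp
    ring
  -- comparison ψ ≤ φ for t ≥ 0
  have hcomp : ∀ t : ℝ, 0 ≤ t →
      Real.sqrt (1 - y ^ 2) * (1 / r - 1 / rr c₀ (x + t, y)) * (rr c₀ (x + t, y)) ^ 3
        ≤ helicoidalF1 c₀ 𝔥 (x + t, y) := by
    intro t ht
    have hs' : 0 < c₀ ^ 2 * y ^ 2 + (x + t) ^ 2 := by positivity
    have hF : helicoidalF1 c₀ 𝔥 (x + t, y) = GG c₀ 𝔥 (x + t, y) * (rr c₀ (x + t, y)) ^ 3 :=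
      F_eq_G_mul (p := (x + t, y)) 𝔥 hs'
    have hGm := G_mono heven hmono hy hx.le (by linarith : x ≤ x + t) hs
    rw [hG0] at hGm
    rw [hF]
    apply mul_le_mul_of_nonneg_right _ (pow_nonneg (Real.sqrt_nonneg _) 3)
    rw [← hrdef] at hGm
    linarith
  -- pass to slopes
  have hφ0 : helicoidalF1 c₀ 𝔥 (x + 0, y) = 0 := by
    rw [h00]; exact F_zero_of_G (p := (x, y)) 𝔥 hs hG0
  have hψ0 : Real.sqrt (1 - y ^ 2) * (1 / r - 1 / rr c₀ (x + 0, y)) * (rr c₀ (x + 0, y)) ^ 3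
      = 0 := by rw [hρ0r]; ring
  have t1 : Filter.Tendsto (slope (fun t : ℝ =>
      Real.sqrt (1 - y ^ 2) * (1 / r - 1 / rr c₀ (x + t, y)) * (rr c₀ (x + t, y)) ^ 3) 0)
      (nhdsWithin 0 (Set.Ioi 0)) (nhds (x * Real.sqrt (1 - y ^ 2))) :=
    (hasDerivAt_iff_tendsto_slope.1 hψ).mono_left
      (nhdsWithin_mono 0 (fun t ht => ne_of_gt ht))
  have t2 : Filter.Tendsto (slope (fun t : ℝ => helicoidalF1 c₀ 𝔥 (x + t, y)) 0)
      (nhdsWithin 0 (Set.Ioi 0)) (nhds (fderiv ℝ (helicoidalF1 c₀ 𝔥) (x, y) (1, 0))) :=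
    (hasDerivAt_iff_tendsto_slope.1 hφ).mono_left
      (nhdsWithin_mono 0 (fun t ht => ne_of_gt ht))
  have hle : x * Real.sqrt (1 - y ^ 2) ≤ fderiv ℝ (helicoidalF1 c₀ 𝔥) (x, y) (1, 0) := by
    refine le_of_tendsto_of_tendsto t1 t2 ?_
    filter_upwards [self_mem_nhdsWithin] with t ht
    have ht0 : 0 < t := ht
    rw [slope_def_field, slope_def_field]
    rw [hψ0, hφ0, sub_zero, sub_zero, sub_zero]
    gcongr
    exact hcomp t ht0.le
  have : 0 < x * Real.sqrt (1 - y ^ 2) := mul_pos hx (Real.sqrt_pos.2 h1y)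
  linarith


lemma contAt_G {c₀ : ℝ} {𝔥 : ℝ → ℝ} (hC1 : ContDiffOn ℝ 1 𝔥 (Set.Icc (-1) 1))
    {p : ℝ × ℝ} (hs : 0 < c₀ ^ 2 * p.2 ^ 2 + p.1 ^ 2)
    (hu : |p.1 * p.2 / rr c₀ p| < 1) :
    ContinuousAt (GG c₀ 𝔥) p := by
  have hr := rr_pos hs
  have hrc : Continuous (rr c₀) := by
    apply Real.continuous_sqrt.comp
    fun_prop
  have hcu : ContinuousAt (fun q : ℝ × ℝ => q.1 * q.2 / rr c₀ q) p :=
    ContinuousAt.div (by fun_prop) hrc.continuousAt hr.ne'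
  have hch : ContinuousAt 𝔥 (p.1 * p.2 / rr c₀ p) := by
    have hmem : Set.Icc (-1 : ℝ) 1 ∈ nhds (p.1 * p.2 / rr c₀ p) :=
      Icc_mem_nhds (by linarith [(abs_lt.1 hu).1]) (abs_lt.1 hu).2
    exact (hC1.continuousOn.continuousWithinAt (mem_of_mem_nhds hmem)).continuousAt hmem
  have h1 : ContinuousAt (fun q : ℝ × ℝ => 2 * 𝔥 (q.1 * q.2 / rr c₀ q)) p :=
    (ContinuousAt.comp (f := fun q : ℝ × ℝ => q.1 * q.2 / rr c₀ q) (x := p) hch hcu).const_mul 2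
  have h2 : ContinuousAt (fun q : ℝ × ℝ =>
      Real.sqrt (1 - q.2 ^ 2) * ((c₀ ^ 2 * q.2 ^ 2 + q.1 ^ 2) + c₀ ^ 2 * q.2 ^ 2)
        / (rr c₀ q) ^ 3) p := by
    apply ContinuousAt.div
    · exact ((Real.continuous_sqrt.comp (by fun_prop)).continuousAt).mul (by fun_prop)
    · exact (hrc.pow 3).continuousAt
    · positivity
  exact h1.sub h2

lemma F_symm {c₀ : ℝ} {𝔥 : ℝ → ℝ} (heven : ∀ t ∈ Set.Icc (-1 : ℝ) 1, 𝔥 (-t) = 𝔥 t)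
    {x y : ℝ} (hx : 0 ≤ x) (hy : |y| ≤ 1) :
    helicoidalF1 c₀ 𝔥 (x, -y) = helicoidalF1 c₀ 𝔥 (x, y) := by
  have hu : |x * y / rr c₀ (x, y)| ≤ |y| := abs_u_le (c₀ := c₀) (p := (x, y)) hx
  have hmem : x * y / rr c₀ (x, y) ∈ Set.Icc (-1 : ℝ) 1 := by
    rw [Set.mem_Icc, ← abs_le]; exact le_trans hu hy
  have hrr : rr c₀ (x, y) = Real.sqrt (c₀ ^ 2 * y ^ 2 + x ^ 2) := rfl
  rw [helicoidalF1, helicoidalF1]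
  simp only [neg_sq]
  rw [show x * -y / Real.sqrt (c₀ ^ 2 * y ^ 2 + x ^ 2)
      = -(x * y / Real.sqrt (c₀ ^ 2 * y ^ 2 + x ^ 2)) by ring]
  rw [hrr] at hmem
  rw [heven _ hmem]

end Helic


open Set Filter Helic in
set_option maxHeartbeats 1000000 in
/-- If `𝔥 ∈ C¹([−1,1])` is positive, even and increasing on
`[0,1]`, then the nullcline `Γ₁` is connected; it is a regular curve with
endpoints `p₁` and `−p₁`, symmetric with respect to `y = 0`, and it divides
the phase space `Θ₁` into exactly two regions: a bounded one `Λ₀` adjacent to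
the axis `x = 0` and an unbounded one `Λ_∞`. -/
theorem helicoidal_nullcline_connected (c₀ : ℝ) (hc₀ : c₀ ≠ 0) (𝔥 : ℝ → ℝ)
    (hC1 : ContDiffOn ℝ 1 𝔥 (Set.Icc (-1) 1))
    (hpos : ∀ t ∈ Set.Icc (-1 : ℝ) 1, 0 < 𝔥 t)
    (heven : ∀ t ∈ Set.Icc (-1 : ℝ) 1, 𝔥 (-t) = 𝔥 t)
    (hmono : MonotoneOn 𝔥 (Set.Icc 0 1)) :
    let Θ₁ : Set (ℝ × ℝ) := Set.Ioi 0 ×ˢ Set.Ioo (-1) 1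
    let Γ₁ : Set (ℝ × ℝ) := {p | p ∈ Θ₁ ∧ helicoidalF1 c₀ 𝔥 p = 0}
    let p₁ : ℝ × ℝ := (0, 1 / Real.sqrt (1 + c₀ ^ 2 * (𝔥 0) ^ 2))
    IsConnected Γ₁ ∧
    (∀ p ∈ Γ₁, fderiv ℝ (helicoidalF1 c₀ 𝔥) p ≠ 0) ∧
    closure Γ₁ = Γ₁ ∪ {p₁, -p₁} ∧
    (∀ x y : ℝ, (x, y) ∈ Γ₁ ↔ (x, -y) ∈ Γ₁) ∧
    (∃ Λ₀ Λinf : Set (ℝ × ℝ),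
      Θ₁ \ Γ₁ = Λ₀ ∪ Λinf ∧ Disjoint Λ₀ Λinf ∧
      IsConnected Λ₀ ∧ IsConnected Λinf ∧
      Bornology.IsBounded Λ₀ ∧ ¬ Bornology.IsBounded Λinf ∧
      (∃ y : ℝ, ((0 : ℝ), y) ∈ closure Λ₀)) := by
  intro Θ₁ Γ₁ p₁
  have hh0 : 0 < 𝔥 0 := hpos 0 (by norm_num)
  set y₁ : ℝ := 1 / Real.sqrt (1 + c₀ ^ 2 * (𝔥 0) ^ 2) with hy₁def
  have hy10 : 0 < y₁ := y1_pos hh0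
  have hy11 : y₁ < 1 := y1_lt_one hc₀ hh0
  -- min and max of 𝔥 on [-1,1]
  obtain ⟨t₀, ht₀, hmin₀⟩ := isCompact_Icc.exists_isMinOn (Set.nonempty_Icc.2 (by norm_num))
    hC1.continuousOn
  obtain ⟨t₁, ht₁, hmax₁⟩ := isCompact_Icc.exists_isMaxOn (Set.nonempty_Icc.2 (by norm_num))
    hC1.continuousOn
  set m : ℝ := 𝔥 t₀ with hmdef
  set M : ℝ := 𝔥 t₁ with hMdef
  have hm : ∀ t ∈ Set.Icc (-1 : ℝ) 1, m ≤ 𝔥 t := fun t ht => hmin₀ ht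
  have hM : ∀ t ∈ Set.Icc (-1 : ℝ) 1, 𝔥 t ≤ M := fun t ht => hmax₁ ht
  have hm0 : 0 < m := hpos t₀ ht₀
  have hM0 : 0 < M := hpos t₁ ht₁
  have hmh0 : m ≤ 𝔥 0 := hm 0 (by norm_num)
  set R₀ : ℝ := max 1 ((1 + c₀ ^ 2) / m) with hR₀def
  have hR₀1 : (1 : ℝ) ≤ R₀ := le_max_left _ _
  have hR₀2 : (1 + c₀ ^ 2) / m ≤ R₀ := le_max_right _ _
  have hR₀pos : 0 < R₀ := lt_of_lt_of_le one_pos hR₀1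
  have hfar : ∀ x y : ℝ, y ∈ Set.Ioo (-1 : ℝ) 1 → R₀ ≤ x → 0 < GG c₀ 𝔥 (x, y) :=
    fun x y hy hx => G_far hm hm0 hy (le_trans hR₀1 hx) (le_trans hR₀2 hx)
  have h0D : (0:ℝ) ∈ Set.Ioo (-y₁) y₁ := ⟨by linarith, hy10⟩
  have hDsub : Set.Ioo (-y₁) y₁ ⊆ Set.Ioo (-1 : ℝ) 1 := fun y hy =>
    ⟨by linarith [hy.1], lt_trans hy.2 hy11⟩
  have habsD : ∀ y : ℝ, y ∈ Set.Ioo (-y₁) y₁ ↔ |y| < y₁ := fun y => (abs_lt).symm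
  -- sign of G on the axis x = 0
  have hG0neg : ∀ y : ℝ, y ≠ 0 → |y| < y₁ → GG c₀ 𝔥 (0, y) < 0 := by
    intro y hy0 hyy
    have h := (y1_lt_iff hc₀ hh0).1 hyy
    rw [G_at_zero 𝔥 (mul_ne_zero hc₀ hy0)]
    have habs : 0 < |c₀ * y| := abs_pos.2 (mul_ne_zero hc₀ hy0)
    rw [sub_neg, lt_div_iff₀ habs]
    linarith
  have hG0nonneg : ∀ y : ℝ, y ≠ 0 → ¬(|y| < y₁) → 0 ≤ GG c₀ 𝔥 (0, y) := by
    intro y hy0 hyy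
    have h : Real.sqrt (1 - y ^ 2) ≤ 𝔥 0 * |c₀ * y| := by
      by_contra hcon; push_neg at hcon
      exact hyy ((y1_lt_iff hc₀ hh0).2 hcon)
    have habs : 0 < |c₀ * y| := abs_pos.2 (mul_ne_zero hc₀ hy0)
    rw [G_at_zero 𝔥 (mul_ne_zero hc₀ hy0), sub_nonneg, div_le_iff₀ habs]
    linarith
  -- strict monotonicity in x
  have hstrict : ∀ y ∈ Set.Ioo (-1 : ℝ) 1, ∀ x₁ x₂ : ℝ, 0 ≤ x₁ → x₁ < x₂ →
      0 < c₀ ^ 2 * y ^ 2 + x₁ ^ 2 → GG c₀ 𝔥 (x₁, y) < GG c₀ 𝔥 (x₂, y) := by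
    intro y hy x₁ x₂ h0 h12 hs
    have h := G_mono heven hmono hy h0 h12.le hs
    have hr1 : 0 < rr c₀ (x₁, y) := rr_pos hs
    have hr12 : rr c₀ (x₁, y) < rr c₀ (x₂, y) := rr_strict h0 h12
    have hq : 0 < 1 / rr c₀ (x₁, y) - 1 / rr c₀ (x₂, y) := by
      have := one_div_lt_one_div_of_lt hr1 hr12
      linarith
    have hsq : 0 < Real.sqrt (1 - y ^ 2) := Real.sqrt_pos.2 (by nlinarith [hy.1, hy.2])
    nlinarith
  -- existence of the root for y in D
  have hex : ∀ y : ℝ, ∃ x : ℝ, y ∈ Set.Ioo (-y₁) y₁ →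
      0 < x ∧ x < R₀ ∧ GG c₀ 𝔥 (x, y) = 0 := by
    intro y
    by_cases hyD : y ∈ Set.Ioo (-y₁) y₁
    · rcases eq_or_ne y 0 with rfl | hy0
      · refine ⟨1 / (2 * 𝔥 0), fun _ => ⟨by positivity, ?_, ?_⟩⟩
        · calc 1 / (2 * 𝔥 0) < 1 / m := by
                apply one_div_lt_one_div_of_lt hm0; linarith
            _ ≤ (1 + c₀ ^ 2) / m := by gcongr; nlinarith [sq_nonneg c₀]
            _ ≤ R₀ := hR₀2
        · rw [G_x0 𝔥 (by positivity), one_div_one_div]; ring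
      · have hyI : y ∈ Set.Ioo (-1 : ℝ) 1 := hDsub hyD
        have hyabs : |y| < 1 := abs_lt.2 ⟨hyI.1, hyI.2⟩
        have hcont : ContinuousOn (fun x : ℝ => GG c₀ 𝔥 (x, y)) (Set.Icc 0 R₀) := by
          intro x hx
          have hsx : 0 < c₀ ^ 2 * y ^ 2 + x ^ 2 := by positivity
          exact (ContinuousAt.comp (f := fun x : ℝ => ((x : ℝ), y)) (x := x)
            (contAt_G hC1 (p := (x, y)) hsx
              (lt_of_le_of_lt (abs_u_le (c₀ := c₀) (p := (x, y)) hx.1) hyabs))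
            (by fun_prop)).continuousWithinAt
        have h0lt : GG c₀ 𝔥 (0, y) < 0 := hG0neg y hy0 (abs_lt.2 ⟨hyD.1, hyD.2⟩)
        have hRgt : 0 < GG c₀ 𝔥 (R₀, y) := hfar R₀ y hyI le_rfl
        have hIV := intermediate_value_Ioo hR₀pos.le hcont
        obtain ⟨x, hxI, hxeq⟩ := hIV ⟨h0lt, hRgt⟩
        exact ⟨x, fun _ => ⟨hxI.1, hxI.2, hxeq⟩⟩
    · exact ⟨1, fun h => absurd h hyD⟩
  choose g hg using hex
  -- basic sign facts
  have hlt : ∀ y ∈ Set.Ioo (-y₁) y₁, ∀ x : ℝ, 0 < x → x < g y → GG c₀ 𝔥 (x, y) < 0 := by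
    intro y hyD x hx hxg
    have h := hstrict y (hDsub hyD) x (g y) hx.le hxg (by positivity)
    rw [(hg y hyD).2.2] at h; exact h
  have hgt : ∀ y ∈ Set.Ioo (-y₁) y₁, ∀ x : ℝ, g y < x → 0 < GG c₀ 𝔥 (x, y) := by
    intro y hyD x hxg
    have h := hstrict y (hDsub hyD) (g y) x (hg y hyD).1.le hxg
      (by have := (hg y hyD).1; positivity)
    rw [(hg y hyD).2.2] at h; exact h
  have hposout : ∀ y ∈ Set.Ioo (-1 : ℝ) 1, y ∉ Set.Ioo (-y₁) y₁ → ∀ x : ℝ, 0 < x →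
      0 < GG c₀ 𝔥 (x, y) := by
    intro y hy hyD x hx
    have hy0 : y ≠ 0 := by
      rintro rfl; exact hyD ⟨by linarith, hy10⟩
    have h0 : 0 ≤ GG c₀ 𝔥 (0, y) := hG0nonneg y hy0 (fun hc => hyD (abs_lt.1 hc))
    have := hstrict y hy 0 x le_rfl hx (by positivity)
    linarith
  -- the master characterization
  have hchar : ∀ x y : ℝ, 0 < x → y ∈ Set.Ioo (-1 : ℝ) 1 →
      ((helicoidalF1 c₀ 𝔥 (x, y) < 0 ↔ y ∈ Set.Ioo (-y₁) y₁ ∧ x < g y) ∧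
       (helicoidalF1 c₀ 𝔥 (x, y) = 0 ↔ y ∈ Set.Ioo (-y₁) y₁ ∧ x = g y) ∧
       (0 < helicoidalF1 c₀ 𝔥 (x, y) ↔ y ∉ Set.Ioo (-y₁) y₁ ∨ g y < x)) := by
    intro x y hx hy
    have hs : 0 < c₀ ^ 2 * y ^ 2 + x ^ 2 := by positivity
    have hr3 : 0 < (rr c₀ (x, y)) ^ 3 := pow_pos (rr_pos hs) 3
    have hFeq := F_eq_G_mul (c₀ := c₀) (p := (x, y)) 𝔥 hs
    have e1 : helicoidalF1 c₀ 𝔥 (x, y) < 0 ↔ GG c₀ 𝔥 (x, y) < 0 := by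
      rw [hFeq]; constructor <;> intro h <;> nlinarith
    have e2 : helicoidalF1 c₀ 𝔥 (x, y) = 0 ↔ GG c₀ 𝔥 (x, y) = 0 := by
      rw [hFeq, mul_eq_zero]
      exact ⟨fun h => h.resolve_right (ne_of_gt hr3), fun h => Or.inl h⟩
    have e3 : 0 < helicoidalF1 c₀ 𝔥 (x, y) ↔ 0 < GG c₀ 𝔥 (x, y) := by
      rw [hFeq]; constructor <;> intro h <;> nlinarith
    by_cases hyD : y ∈ Set.Ioo (-y₁) y₁
    · have A : x < g y → GG c₀ 𝔥 (x, y) < 0 := hlt y hyD x hx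
      have B : x = g y → GG c₀ 𝔥 (x, y) = 0 := fun h => by rw [h]; exact (hg y hyD).2.2
      have C : g y < x → 0 < GG c₀ 𝔥 (x, y) := hgt y hyD x
      refine ⟨?_, ?_, ?_⟩
      · rw [e1]
        constructor
        · intro h
          refine ⟨hyD, ?_⟩
          rcases lt_trichotomy x (g y) with h' | h' | h'
          · exact h'
          · exfalso; have := B h'; linarith
          · exfalso; have := C h'; linarith
        · exact fun h => A h.2
      · rw [e2]
        constructor
        · intro h
          refine ⟨hyD, ?_⟩
          rcases lt_trichotomy x (g y) with h' | h' | h'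
          · exfalso; have := A h'; linarith
          · exact h'
          · exfalso; have := C h'; linarith
        · exact fun h => B h.2
      · rw [e3]
        constructor
        · intro h
          refine Or.inr ?_
          rcases lt_trichotomy x (g y) with h' | h' | h'
          · exfalso; have := A h'; linarith
          · exfalso; have := B h'; linarith
          · exact h'
        · rintro (h | h)
          · exact absurd hyD h
          · exact C h
    · have hGpos := hposout y hy hyD x hx
      refine ⟨?_, ?_, ?_⟩
      · rw [e1]
        constructor
        · intro h; linarith
        · rintro ⟨h, -⟩; exact absurd h hyD
      · rw [e2]
        constructor
        · intro h; linarith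
        · rintro ⟨h, -⟩; exact absurd h hyD
      · rw [e3]
        exact ⟨fun _ => Or.inl hyD, fun _ => hGpos⟩
  -- Γ₁ as a graph
  have hΓeq : Γ₁ = (fun y => (g y, y)) '' Set.Ioo (-y₁) y₁ := by
    ext p
    constructor
    · rintro ⟨⟨hp1, hp2⟩, hpF⟩
      have h := ((hchar p.1 p.2 hp1 hp2).2.1).1 (by rw [Prod.mk.eta]; exact hpF)
      exact ⟨p.2, h.1, by show (g p.2, p.2) = p; rw [← h.2, Prod.mk.eta]⟩
    · rintro ⟨y, hyD, rfl⟩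
      exact ⟨⟨(hg y hyD).1, hDsub hyD⟩,
        F_zero_of_G (c₀ := c₀) (p := (g y, y)) 𝔥
          (by have := (hg y hyD).1; positivity) (hg y hyD).2.2⟩
  -- continuity of g
  have hgcont : ∀ y₀ ∈ Set.Ioo (-y₁) y₁, ContinuousAt g y₀ := by
    intro y₀ hy₀
    have hy₀' : y₀ ∈ Set.Ioo (-1 : ℝ) 1 := hDsub hy₀
    have hy₀abs : |y₀| < 1 := abs_lt.2 ⟨hy₀'.1, hy₀'.2⟩
    rw [ContinuousAt, Metric.tendsto_nhds]
    intro ε hε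
    have ha0 : 0 < g y₀ := (hg y₀ hy₀).1
    set e : ℝ := min (ε / 2) (g y₀ / 2) with hedef
    have he0 : 0 < e := lt_min (by linarith) (by linarith)
    have heε : e ≤ ε / 2 := min_le_left _ _
    have hea : e ≤ g y₀ / 2 := min_le_right _ _
    have hae : 0 < g y₀ - e := by linarith
    have hneg : GG c₀ 𝔥 (g y₀ - e, y₀) < 0 := hlt y₀ hy₀ _ hae (by linarith)
    have hpos2 : 0 < GG c₀ 𝔥 (g y₀ + e, y₀) := hgt y₀ hy₀ _ (by linarith)
    have hc1 : ContinuousAt (fun y => GG c₀ 𝔥 (g y₀ - e, y)) y₀ :=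
      ContinuousAt.comp (f := fun y : ℝ => ((g y₀ - e : ℝ), y)) (x := y₀)
        (contAt_G hC1 (p := (g y₀ - e, y₀)) (by positivity)
          (lt_of_le_of_lt (abs_u_le (c₀ := c₀) (p := (g y₀ - e, y₀)) hae.le) hy₀abs))
        (by fun_prop)
    have hc2 : ContinuousAt (fun y => GG c₀ 𝔥 (g y₀ + e, y)) y₀ :=
      ContinuousAt.comp (f := fun y : ℝ => ((g y₀ + e : ℝ), y)) (x := y₀)
        (contAt_G hC1 (p := (g y₀ + e, y₀)) (by positivity)
          (lt_of_le_of_lt (abs_u_le (c₀ := c₀) (p := (g y₀ + e, y₀)) (add_pos ha0 he0).le) hy₀abs))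
        (by fun_prop)
    have hev1 : ∀ᶠ y in nhds y₀, GG c₀ 𝔥 (g y₀ - e, y) < 0 := hc1 (Iio_mem_nhds hneg)
    have hev2 : ∀ᶠ y in nhds y₀, 0 < GG c₀ 𝔥 (g y₀ + e, y) := hc2 (Ioi_mem_nhds hpos2)
    have hev3 : ∀ᶠ y in nhds y₀, y ∈ Set.Ioo (-y₁) y₁ := isOpen_Ioo.mem_nhds hy₀
    filter_upwards [hev1, hev2, hev3] with y h1 h2 h3
    have hgy1 : g y₀ - e < g y := by
      by_contra hle
      push_neg at hle
      rcases eq_or_lt_of_le hle with heq | hlt'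
      · rw [← heq, (hg y h3).2.2] at h1; linarith
      · have := hgt y h3 _ hlt'; linarith
    have hgy2 : g y < g y₀ + e := by
      by_contra hle
      push_neg at hle
      rcases eq_or_lt_of_le hle with heq | hlt'
      · rw [heq, (hg y h3).2.2] at h2; linarith
      · have := hlt y h3 _ (by linarith) hlt'; linarith
    rw [Real.dist_eq, abs_sub_lt_iff]
    constructor <;> linarith
  refine ⟨?_, ?_, ?_, ?_, ?_⟩
  -- 1. connectedness
  · rw [hΓeq]
    apply IsConnected.image
    · exact ⟨⟨0, by constructor <;> linarith⟩, isPreconnected_Ioo⟩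
    · exact ContinuousOn.prodMk
        (fun y hy => (hgcont y hy).continuousWithinAt) continuousOn_id
  -- 2. fderiv nonzero
  · rintro p ⟨⟨hp1, hp2⟩, hpF⟩ hfd
    have hp1' : 0 < p.1 := hp1
    have hs : 0 < c₀ ^ 2 * p.2 ^ 2 + p.1 ^ 2 := by positivity
    have hG0 : GG c₀ 𝔥 p = 0 := by
      have hFeq := F_eq_G_mul (c₀ := c₀) (p := p) 𝔥 hs
      rw [hFeq, mul_eq_zero] at hpF
      exact hpF.resolve_right (ne_of_gt (pow_pos (rr_pos hs) 3))
    have hder := fderiv_F_pos hC1 heven hmono hp1 hp2 (by rw [Prod.mk.eta]; exact hG0)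
    rw [Prod.mk.eta, hfd] at hder
    simp at hder
  -- 3. closure
  · have hp₁eq : p₁ = ((0:ℝ), y₁) := rfl
    have hnegp₁ : -p₁ = ((0:ℝ), -y₁) := by rw [hp₁eq, Prod.neg_mk, neg_zero]
    apply Set.Subset.antisymm
    · intro q hq
      have hbox : q ∈ Set.Icc (0:ℝ) R₀ ×ˢ Set.Icc (-y₁) y₁ := by
        refine closure_minimal ?_ (isClosed_Icc.prod isClosed_Icc) hq
        intro p hp
        rw [hΓeq] at hp
        obtain ⟨y, hyD, rfl⟩ := hp
        exact Set.mem_prod.2 ⟨⟨(hg y hyD).1.le, (hg y hyD).2.1.le⟩, ⟨hyD.1.le, hyD.2.le⟩⟩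
      obtain ⟨⟨hq1a, hq1b⟩, hq2a, hq2b⟩ := Set.mem_prod.1 hbox
      obtain ⟨seqq, hseqΓ, hseqlim⟩ := mem_closure_iff_seq_limit.1 hq
      have hprops : ∀ n, 0 < (seqq n).1 ∧ (seqq n).2 ∈ Set.Ioo (-y₁) y₁ ∧
          GG c₀ 𝔥 (seqq n) = 0 := by
        intro n
        have h := hseqΓ n
        rw [hΓeq] at h
        obtain ⟨y, hyD, heq⟩ := h
        have heq' : seqq n = (g y, y) := heq.symm
        rw [heq']
        exact ⟨(hg y hyD).1, hyD, (hg y hyD).2.2⟩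
      rcases eq_or_lt_of_le hq1a with hq10 | hq10
      · -- q.1 = 0
        right
        have hy2111 : q.2 = y₁ ∨ q.2 = -y₁ := by
          by_contra hcon
          push_neg at hcon
          have habs : |q.2| < y₁ := by
            rcases lt_or_eq_of_le hq2b with h | h
            · rcases lt_or_eq_of_le hq2a with h' | h'
              · exact abs_lt.2 ⟨h', h⟩
              · exact absurd h'.symm hcon.2
            · exact absurd h hcon.1
          rcases eq_or_ne q.2 0 with hq20 | hq20
          · -- q = (0,0)
            have hq00 : q = ((0:ℝ), (0:ℝ)) := by
              rw [Prod.ext_iff]; exact ⟨hq10.symm, hq20⟩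
            have hrlim : Filter.Tendsto (fun n => rr c₀ (seqq n)) Filter.atTop (nhds 0) := by
              have hrc : Continuous (rr c₀) := Real.continuous_sqrt.comp (by fun_prop)
              have h := (hrc.continuousAt (x := q)).tendsto.comp hseqlim
              have he : rr c₀ q = 0 := by rw [hq00]; simp [Helic.rr]
              rwa [he] at h
            have hylim : Filter.Tendsto (fun n => Real.sqrt (1 - ((seqq n).2)^2))
                Filter.atTop (nhds 1) := by
              have hcy : Continuous (fun p : ℝ × ℝ => Real.sqrt (1 - p.2^2)) :=
                Real.continuous_sqrt.comp (by fun_prop)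
              have h := (hcy.continuousAt (x := q)).tendsto.comp hseqlim
              have he : Real.sqrt (1 - q.2^2) = 1 := by rw [hq00]; simp
              rwa [he] at h
            have hev1 : ∀ᶠ n in Filter.atTop, rr c₀ (seqq n) < 1/(4*M) :=
              hrlim (Iio_mem_nhds (by positivity))
            have hev2 : ∀ᶠ n in Filter.atTop, 1/2 < Real.sqrt (1 - ((seqq n).2)^2) :=
              hylim (Ioi_mem_nhds (by norm_num))
            obtain ⟨n, h1, h2⟩ := (hev1.and hev2).exists
            obtain ⟨hx, hyD, hG⟩ := hprops n
            have hyI : (seqq n).2 ∈ Set.Ioo (-1:ℝ) 1 := hDsub hyD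
            have hs : 0 < c₀^2*((seqq n).2)^2+((seqq n).1)^2 := by positivity
            have hrp : 0 < rr c₀ (seqq n) := rr_pos hs
            have hu1 : |(seqq n).1*((seqq n).2)/rr c₀ (seqq n)| ≤ 1 :=
              le_trans (abs_u_le hx.le) (abs_le.2 ⟨hyI.1.le, hyI.2.le⟩)
            have hhM : 𝔥 ((seqq n).1*((seqq n).2)/rr c₀ (seqq n)) ≤ M := hM _ (abs_le.1 hu1)
            have hZ : 2 * 𝔥 ((seqq n).1*((seqq n).2)/rr c₀ (seqq n)) = Real.sqrt (1-((seqq n).2)^2) *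
                ((c₀^2*((seqq n).2)^2+((seqq n).1)^2)+c₀^2*((seqq n).2)^2)/(rr c₀ (seqq n))^3 := by
              have hh := hG; simp only [GG] at hh; linarith
            have hlow : Real.sqrt (1-((seqq n).2)^2) / rr c₀ (seqq n) ≤
                Real.sqrt (1-((seqq n).2)^2) *
                ((c₀^2*((seqq n).2)^2+((seqq n).1)^2)+c₀^2*((seqq n).2)^2)/(rr c₀ (seqq n))^3 := by
              rw [div_le_div_iff₀ hrp (pow_pos hrp 3)]
              have hsq := sq_rr (c₀ := c₀) (seqq n)
              rw [← hsq]
              nlinarith [Real.sqrt_nonneg (1-((seqq n).2)^2), sq_nonneg (c₀*((seqq n).2)), hrp,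
                mul_nonneg (Real.sqrt_nonneg (1-((seqq n).2)^2))
                  (mul_nonneg (sq_nonneg (c₀*((seqq n).2))) hrp.le)]
            have hupper : 2*M < Real.sqrt (1-((seqq n).2)^2) / rr c₀ (seqq n) := by
              rw [lt_div_iff₀ hrp]
              have h5 : 2*M*rr c₀ (seqq n) < 2*M*(1/(4*M)) := by gcongr
              have h6 : 2*M*(1/(4*M)) = 1/2 := by field_simp; ring
              linarith
            linarith
          · -- q.2 ≠ 0
            have hsq : 0 < c₀^2*q.2^2+q.1^2 := by
              have h5 : 0 < c₀^2*q.2^2 := by positivity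
              nlinarith [sq_nonneg q.1]
            have hu : |q.1 * q.2 / rr c₀ q| < 1 := by
              rw [← hq10]
              simp
            have hcg : ContinuousAt (GG c₀ 𝔥) q := contAt_G hC1 hsq hu
            have ht := (hcg.tendsto).comp hseqlim
            have ht0 : Filter.Tendsto (fun _ : ℕ => (0:ℝ)) Filter.atTop (nhds (GG c₀ 𝔥 q)) :=
              ht.congr (fun n => (hprops n).2.2)
            have h0' : GG c₀ 𝔥 q = 0 :=
              (tendsto_nhds_unique ht0 tendsto_const_nhds)
            have hq0' : q = ((0:ℝ), q.2) := by
              rw [Prod.ext_iff]; exact ⟨hq10.symm, rfl⟩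
            have hneg : GG c₀ 𝔥 ((0:ℝ), q.2) < 0 := hG0neg q.2 hq20 habs
            rw [← hq0'] at hneg
            linarith
        rcases hy2111 with h | h
        · have hqp : q = p₁ := by rw [hp₁eq, Prod.ext_iff]; exact ⟨hq10.symm, h⟩
          rw [hqp]; exact Set.mem_insert _ _
        · have hqp : q = -p₁ := by rw [hnegp₁, Prod.ext_iff]; exact ⟨hq10.symm, h⟩
          rw [hqp]; exact Set.mem_insert_of_mem _ rfl
      · -- q.1 > 0
        left
        have hyq : q.2 ∈ Set.Ioo (-1:ℝ) 1 := ⟨by linarith [hq2a], lt_of_le_of_lt hq2b hy11⟩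
        have hsq : 0 < c₀^2*q.2^2+q.1^2 := by positivity
        have habsy : |q.2| < 1 := abs_lt.2 ⟨hyq.1, hyq.2⟩
        have hFq : ContinuousAt (helicoidalF1 c₀ 𝔥) q := (diffAt_F hC1 hsq
          (lt_of_le_of_lt (abs_u_le hq10.le) habsy) habsy).continuousAt
        have ht := (hFq.tendsto).comp hseqlim
        have ht0 : Filter.Tendsto (fun _ : ℕ => (0:ℝ)) Filter.atTop
            (nhds (helicoidalF1 c₀ 𝔥 q)) := ht.congr (fun n => (hseqΓ n).2)
        exact ⟨⟨hq10, hyq⟩, tendsto_nhds_unique ht0 tendsto_const_nhds⟩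
    · -- ⊇
      apply Set.union_subset subset_closure
      have key : ∀ z : ℝ, (z = y₁ ∨ z = -y₁) → ((0:ℝ), z) ∈ closure Γ₁ := by
        intro z hz
        have hzI : z ∈ Set.Ioo (-1:ℝ) 1 := by
          rcases hz with rfl | rfl
          · exact ⟨by linarith, hy11⟩
          · exact ⟨by linarith, by linarith⟩
        have hzD : z ∉ Set.Ioo (-y₁) y₁ := by
          rcases hz with rfl | rfl
          · exact fun hc => lt_irrefl _ hc.2
          · exact fun hc => lt_irrefl _ hc.1
        rw [Metric.mem_closure_iff]
        intro ε hε
        set e : ℝ := min (ε/2) 1 with hedef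
        have he0 : 0 < e := lt_min (by linarith) one_pos
        have heε : e ≤ ε/2 := min_le_left _ _
        have hGe : 0 < GG c₀ 𝔥 (e, z) := hposout z hzI hzD e he0
        have hc : ContinuousAt (fun y => GG c₀ 𝔥 (e, y)) z :=
          ContinuousAt.comp (f := fun y : ℝ => ((e:ℝ), y)) (x := z)
            (contAt_G hC1 (p := (e, z)) (by positivity)
              (lt_of_le_of_lt (abs_u_le (c₀:=c₀) (p:=(e,z)) he0.le) (abs_lt.2 ⟨hzI.1, hzI.2⟩)))
            (by fun_prop)
        have hev : ∀ᶠ y in nhds z, 0 < GG c₀ 𝔥 (e, y) := hc (Ioi_mem_nhds hGe)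
        obtain ⟨δ, hδ0, hδ⟩ := Metric.eventually_nhds_iff.1 hev
        set d : ℝ := min δ (min y₁ ε) / 2 with hddef
        have hd0 : 0 < d := div_pos (lt_min hδ0 (lt_min hy10 hε)) two_pos
        have hdδ : d < δ := by
          have h5 : d ≤ δ/2 := by rw [hddef]; gcongr; exact min_le_left _ _
          linarith
        have hdy₁ : d < y₁ := by
          have h5 : d ≤ y₁/2 := by
            rw [hddef]; gcongr
            exact le_trans (min_le_right _ _) (min_le_left _ _)
          linarith
        have hdε : d ≤ ε/2 := by
          rw [hddef]; gcongr
          exact le_trans (min_le_right _ _) (min_le_right _ _)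
        have hcase : ∃ y' : ℝ, y' ∈ Set.Ioo (-y₁) y₁ ∧ dist y' z < δ ∧ dist y' z ≤ ε/2 := by
          rcases hz with rfl | rfl
          · refine ⟨y₁ - d, ⟨by linarith, by linarith⟩, ?_, ?_⟩
            · rw [Real.dist_eq]
              rw [show y₁ - d - y₁ = -d by ring, abs_neg, abs_of_pos hd0]
              exact hdδ
            · rw [Real.dist_eq]
              rw [show y₁ - d - y₁ = -d by ring, abs_neg, abs_of_pos hd0]
              linarith
          · refine ⟨-y₁ + d, ⟨by linarith, by linarith⟩, ?_, ?_⟩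
            · rw [Real.dist_eq]
              rw [show -y₁ + d - -y₁ = d by ring, abs_of_pos hd0]
              exact hdδ
            · rw [Real.dist_eq]
              rw [show -y₁ + d - -y₁ = d by ring, abs_of_pos hd0]
              linarith
        obtain ⟨y', hy'D, hy'δ, hy'ε⟩ := hcase
        have hGy' : 0 < GG c₀ 𝔥 (e, y') := hδ hy'δ
        have hgye : g y' < e := by
          rcases lt_trichotomy (g y') e with h | h | h
          · exact h
          · exfalso; rw [← h, (hg y' hy'D).2.2] at hGy'; linarith
          · exfalso; have := hlt y' hy'D e he0 h; linarith
        refine ⟨(g y', y'), ?_, ?_⟩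
        · rw [hΓeq]; exact ⟨y', hy'D, rfl⟩
        · rw [Prod.dist_eq]
          have h1 : dist (0:ℝ) (g y') < ε := by
            rw [Real.dist_eq, zero_sub, abs_neg, abs_of_pos (hg y' hy'D).1]
            linarith [hgye, heε]
          have h2 : dist z y' < ε := by
            rw [dist_comm]; linarith [hy'ε]
          exact max_lt h1 h2
      intro p hp
      rcases hp with rfl | hp
      · have := key y₁ (Or.inl rfl)
        rw [hp₁eq]
        exact this
      · rw [Set.mem_singleton_iff] at hp
        subst hp
        have := key (-y₁) (Or.inr rfl)
        rw [hnegp₁]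
        exact this
  -- 4. symmetry
  · have fwd : ∀ x y : ℝ, (x, y) ∈ Γ₁ → (x, -y) ∈ Γ₁ := by
      rintro x y ⟨⟨hx, hy⟩, hF⟩
      have hy' : -y ∈ Set.Ioo (-1 : ℝ) 1 := by
        constructor
        · simpa using neg_lt_neg hy.2
        · simpa using neg_lt_neg hy.1
      refine ⟨⟨hx, hy'⟩, ?_⟩
      rw [F_symm heven (le_of_lt hx) (abs_le.2 ⟨hy.1.le, hy.2.le⟩)]
      exact hF
    intro x y
    exact ⟨fwd x y, fun h => by simpa using fwd x (-y) h⟩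
  -- 5. regions
  · set Λ₀ : Set (ℝ × ℝ) := {p | p ∈ Θ₁ ∧ helicoidalF1 c₀ 𝔥 p < 0} with hΛ₀def
    set Λinf : Set (ℝ × ℝ) := {p | p ∈ Θ₁ ∧ 0 < helicoidalF1 c₀ 𝔥 p} with hΛinfdef
    have joined : ∀ (S T : Set (ℝ × ℝ)), Convex ℝ S → S ⊆ T → ∀ p ∈ S, ∀ q ∈ S,
        JoinedIn T p q := fun S T hconv hsub p hp q hq =>
      ((hconv.isPathConnected ⟨p, hp⟩).joinedIn p hp q hq).mono hsub
    have hmemΛ₀ : ∀ t z : ℝ, 0 < t → z ∈ Set.Ioo (-y₁) y₁ → t < g z → (t, z) ∈ Λ₀ :=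
      fun t z ht hz hlt' => ⟨⟨ht, hDsub hz⟩, ((hchar t z ht (hDsub hz)).1).2 ⟨hz, hlt'⟩⟩
    have hmemΛinf : ∀ t z : ℝ, 0 < t → z ∈ Set.Ioo (-1:ℝ) 1 →
        (z ∈ Set.Ioo (-y₁) y₁ → g z < t) → (t, z) ∈ Λinf := by
      intro t z ht hz h
      refine ⟨⟨ht, hz⟩, ((hchar t z ht hz).2.2).2 ?_⟩
      by_cases hzD : z ∈ Set.Ioo (-y₁) y₁
      · exact Or.inr (h hzD)
      · exact Or.inl hzD
    refine ⟨Λ₀, Λinf, ?_, ?_, ?_, ?_, ?_, ?_, 0, ?_⟩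
    · ext p
      constructor
      · rintro ⟨hpΘ, hpΓ⟩
        rcases lt_trichotomy (helicoidalF1 c₀ 𝔥 p) 0 with h | h | h
        · exact Or.inl ⟨hpΘ, h⟩
        · exact absurd (⟨hpΘ, h⟩ : p ∈ Γ₁) hpΓ
        · exact Or.inr ⟨hpΘ, h⟩
      · rintro (⟨hpΘ, h⟩ | ⟨hpΘ, h⟩)
        · exact ⟨hpΘ, fun hc => absurd hc.2 (ne_of_lt h)⟩
        · exact ⟨hpΘ, fun hc => absurd hc.2 (ne_of_gt h)⟩
    · rw [Set.disjoint_left]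
      rintro p ⟨-, h1⟩ ⟨-, h2⟩
      linarith
    · -- IsConnected Λ₀
      apply IsPathConnected.isConnected
      rw [isPathConnected_iff]
      constructor
      · exact ⟨(g 0 / 2, 0), hmemΛ₀ _ _ (half_pos (hg 0 h0D).1) h0D
          (by linarith [(hg 0 h0D).1])⟩
      · rintro p ⟨⟨hp1, hp2⟩, hpF⟩ q ⟨⟨hq1, hq2⟩, hqF⟩
        have hp1' : 0 < p.1 := hp1
        have hq1' : 0 < q.1 := hq1
        have hp' := ((hchar p.1 p.2 hp1' hp2).1).1 (by rw [Prod.mk.eta]; exact hpF)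
        have hq' := ((hchar q.1 q.2 hq1' hq2).1).1 (by rw [Prod.mk.eta]; exact hqF)
        have hI : Set.uIcc p.2 q.2 ⊆ Set.Ioo (-y₁) y₁ :=
          Set.ordConnected_Ioo.uIcc_subset hp'.1 hq'.1
        have hgcI : ContinuousOn g (Set.uIcc p.2 q.2) :=
          fun t ht => (hgcont t (hI ht)).continuousWithinAt
        obtain ⟨s₀, hs₀, hmins⟩ := isCompact_uIcc.exists_isMinOn Set.nonempty_uIcc hgcI
        have hgs₀ : 0 < g s₀ := (hg s₀ (hI hs₀)).1
        set e : ℝ := min (min p.1 q.1) (g s₀) / 2 with hedef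
        have he0 : 0 < e := div_pos (lt_min (lt_min hp1' hq1') hgs₀) two_pos
        have hel : ∀ t ∈ Set.uIcc p.2 q.2, e < g t := by
          intro t ht
          have h1 : e ≤ g s₀ / 2 := by rw [hedef]; gcongr; exact min_le_right _ _
          have h2 : g s₀ ≤ g t := isMinOn_iff.1 hmins t ht
          linarith
        have hep : e < p.1 := by
          have h1 : e ≤ p.1 / 2 := by
            rw [hedef]; gcongr
            exact le_trans (min_le_left _ _) (min_le_left _ _)
          linarith
        have heq' : e < q.1 := by
          have h1 : e ≤ q.1 / 2 := by
            rw [hedef]; gcongr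
            exact le_trans (min_le_left _ _) (min_le_right _ _)
          linarith
        have j1 : JoinedIn Λ₀ p (e, p.2) := by
          refine joined (Set.Icc e p.1 ×ˢ {p.2}) Λ₀
            ((convex_Icc _ _).prod (convex_singleton _)) ?_ p ?_ _ ?_
          · rintro ⟨t, z⟩ ⟨ht, hz⟩
            simp only [Set.mem_singleton_iff] at hz
            subst hz
            exact hmemΛ₀ t p.2 (lt_of_lt_of_le he0 ht.1) hp'.1 (lt_of_le_of_lt ht.2 hp'.2)
          · exact Set.mem_prod.2 ⟨⟨hep.le, le_rfl⟩, rfl⟩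
          · exact Set.mem_prod.2 ⟨⟨le_rfl, hep.le⟩, rfl⟩
        have j2 : JoinedIn Λ₀ (e, p.2) (e, q.2) := by
          refine joined ({e} ×ˢ Set.uIcc p.2 q.2) Λ₀
            ((convex_singleton _).prod (convex_uIcc _ _)) ?_ _ ?_ _ ?_
          · rintro ⟨t, z⟩ ⟨ht, hz⟩
            simp only [Set.mem_singleton_iff] at ht
            subst ht
            exact hmemΛ₀ e z he0 (hI hz) (hel z hz)
          · exact Set.mem_prod.2 ⟨rfl, Set.left_mem_uIcc⟩
          · exact Set.mem_prod.2 ⟨rfl, Set.right_mem_uIcc⟩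
        have j3 : JoinedIn Λ₀ (e, q.2) q := by
          refine joined (Set.Icc e q.1 ×ˢ {q.2}) Λ₀
            ((convex_Icc _ _).prod (convex_singleton _)) ?_ _ ?_ _ ?_
          · rintro ⟨t, z⟩ ⟨ht, hz⟩
            simp only [Set.mem_singleton_iff] at hz
            subst hz
            exact hmemΛ₀ t q.2 (lt_of_lt_of_le he0 ht.1) hq'.1 (lt_of_le_of_lt ht.2 hq'.2)
          · exact Set.mem_prod.2 ⟨⟨le_rfl, heq'.le⟩, rfl⟩
          · exact Set.mem_prod.2 ⟨⟨heq'.le, le_rfl⟩, rfl⟩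
        exact (j1.trans j2).trans j3
    · -- IsConnected Λinf
      apply IsPathConnected.isConnected
      rw [isPathConnected_iff]
      constructor
      · exact ⟨(R₀, 0), hmemΛinf R₀ 0 hR₀pos ⟨by norm_num, by norm_num⟩
          (fun _ => (hg 0 h0D).2.1)⟩
      · rintro p ⟨⟨hp1, hp2⟩, hpF⟩ q ⟨⟨hq1, hq2⟩, hqF⟩
        have hp1' : 0 < p.1 := hp1
        have hq1' : 0 < q.1 := hq1
        have hp' := ((hchar p.1 p.2 hp1' hp2).2.2).1 (by rw [Prod.mk.eta]; exact hpF)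
        have hq' := ((hchar q.1 q.2 hq1' hq2).2.2).1 (by rw [Prod.mk.eta]; exact hqF)
        have hI : Set.uIcc p.2 q.2 ⊆ Set.Ioo (-1:ℝ) 1 :=
          Set.ordConnected_Ioo.uIcc_subset hp2 hq2
        set R : ℝ := max (max p.1 q.1) R₀ with hRdef
        have hRp : p.1 ≤ R := le_trans (le_max_left _ _) (le_max_left _ _)
        have hRq : q.1 ≤ R := le_trans (le_max_right _ _) (le_max_left _ _)
        have hRR₀ : R₀ ≤ R := le_max_right _ _
        have hR0 : 0 < R := lt_of_lt_of_le hR₀pos hRR₀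
        have hgR : ∀ z ∈ Set.Ioo (-y₁) y₁, g z < R :=
          fun z hz => lt_of_lt_of_le (hg z hz).2.1 hRR₀
        have j1 : JoinedIn Λinf p (R, p.2) := by
          refine joined (Set.Icc p.1 R ×ˢ {p.2}) Λinf
            ((convex_Icc _ _).prod (convex_singleton _)) ?_ p ?_ _ ?_
          · rintro ⟨t, z⟩ ⟨ht, hz⟩
            simp only [Set.mem_singleton_iff] at hz
            subst hz
            exact hmemΛinf t p.2 (lt_of_lt_of_le hp1' ht.1) hp2
              (fun hD => lt_of_lt_of_le (hp'.resolve_left (not_not_intro hD)) ht.1)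
          · exact Set.mem_prod.2 ⟨⟨le_rfl, hRp⟩, rfl⟩
          · exact Set.mem_prod.2 ⟨⟨hRp, le_rfl⟩, rfl⟩
        have j2 : JoinedIn Λinf (R, p.2) (R, q.2) := by
          refine joined ({R} ×ˢ Set.uIcc p.2 q.2) Λinf
            ((convex_singleton _).prod (convex_uIcc _ _)) ?_ _ ?_ _ ?_
          · rintro ⟨t, z⟩ ⟨ht, hz⟩
            simp only [Set.mem_singleton_iff] at ht
            subst ht
            exact hmemΛinf R z hR0 (hI hz) (fun hD => hgR z hD)
          · exact Set.mem_prod.2 ⟨rfl, Set.left_mem_uIcc⟩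
          · exact Set.mem_prod.2 ⟨rfl, Set.right_mem_uIcc⟩
        have j3 : JoinedIn Λinf (R, q.2) q := by
          refine joined (Set.Icc q.1 R ×ˢ {q.2}) Λinf
            ((convex_Icc _ _).prod (convex_singleton _)) ?_ _ ?_ _ ?_
          · rintro ⟨t, z⟩ ⟨ht, hz⟩
            simp only [Set.mem_singleton_iff] at hz
            subst hz
            exact hmemΛinf t q.2 (lt_of_lt_of_le hq1' ht.1) hq2
              (fun hD => lt_of_lt_of_le (hq'.resolve_left (not_not_intro hD)) ht.1)
          · exact Set.mem_prod.2 ⟨⟨hRq, le_rfl⟩, rfl⟩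
          · exact Set.mem_prod.2 ⟨⟨le_rfl, hRq⟩, rfl⟩
        exact (j1.trans j2).trans j3
    · -- bounded
      apply Bornology.IsBounded.subset
        ((Metric.isBounded_Icc (0:ℝ) R₀).prod (Metric.isBounded_Icc (-1:ℝ) 1))
      rintro p ⟨⟨hp1, hp2⟩, hpF⟩
      have hp1' : 0 < p.1 := hp1
      have hp' := ((hchar p.1 p.2 hp1' hp2).1).1 (by rw [Prod.mk.eta]; exact hpF)
      exact Set.mem_prod.2 ⟨⟨hp1'.le, (lt_trans hp'.2 (hg _ hp'.1).2.1).le⟩,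
        ⟨hp2.1.le, hp2.2.le⟩⟩
    · -- unbounded
      intro hb
      obtain ⟨C, hC⟩ := Bornology.IsBounded.exists_norm_le hb
      set x : ℝ := max C R₀ + 1 with hxdef
      have hx0 : 0 < x := by
        have := le_max_right C R₀
        linarith
      have hx : ((x : ℝ), (0:ℝ)) ∈ Λinf := hmemΛinf x 0 hx0 ⟨by norm_num, by norm_num⟩
        (fun _ => by
          have h1 := (hg 0 h0D).2.1
          have h2 := le_max_right C R₀
          linarith)
      have h3 := hC _ hx
      have h4 : x ≤ ‖((x : ℝ), (0:ℝ))‖ := by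
        rw [Prod.norm_def]
        simp only [Real.norm_eq_abs]
        exact le_trans (le_abs_self x) (le_max_left _ _)
      have h5 := le_max_left C R₀
      have : x ≤ C := le_trans h4 h3
      linarith
    · -- adjacency at x = 0
      rw [Metric.mem_closure_iff]
      intro ε hε
      set t : ℝ := min (ε/2) (g 0 / 2) with htdef
      have hg00 : 0 < g 0 := (hg 0 h0D).1
      have ht0 : 0 < t := lt_min (by linarith) (by linarith)
      refine ⟨(t, 0), hmemΛ₀ t 0 ht0 h0D
        (lt_of_le_of_lt (min_le_right _ _) (by linarith)), ?_⟩
      have h1 : dist ((0:ℝ), (0:ℝ)) ((t:ℝ), (0:ℝ)) = t := by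
        rw [Prod.dist_eq, Real.dist_eq, Real.dist_eq]
        simp [abs_of_nonneg, ht0.le]
      rw [h1]
      exact lt_of_le_of_lt (min_le_left _ _) (by linarith)
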